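/- For every q ≥ 1, every 𝐧 ∈ ℕ^q_* and every θ > 0 (indeed as a polynomial identity in θ): ∑_{A ⊨ 𝐧} θ^{‖A‖} M_𝐧(A) = (θ)_{|𝐧|}, where the sum runs over all q-colored partitions A of 𝐧. -/

import Mathlib

open Finset Nat
open scoped Classical

/-- `col(A) = ∑_𝐚 A(𝐚) • 𝐚`, the color count vector of a colored partition. -/
def colA {q : ℕ} (A : (Fin q → ℕ) →₀ ℕ) : Fin q → ℕ :=
  fun j => ∑ a ∈ A.support, A a * a j

/-- `‖A‖ = ∑_𝐚 A(𝐚)`, the number of parts of a colored partition. -/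
def asize {q : ℕ} (A : (Fin q → ℕ) →₀ ℕ) : ℕ := ∑ a ∈ A.support, A a

/-- The set of `q`-colored partitions of `𝐧`. -/
def CPartSet {q : ℕ} (n : Fin q → ℕ) : Set ((Fin q → ℕ) →₀ ℕ) :=
  {A | A 0 = 0 ∧ colA A = n}

/-- The multinomial coefficient `M_𝐧(A)` of a colored partition `A ⊨ 𝐧`. -/
noncomputable def Mcoef {q : ℕ} (n : Fin q → ℕ) (A : (Fin q → ℕ) →₀ ℕ) : ℝ :=
  (∏ j, (n j)! : ℝ) *
    ∏ a ∈ A.support,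
      ((Nat.multinomial Finset.univ a : ℝ) ^ A a / ((∑ j, a j : ℝ) ^ A a * (A a)!))

noncomputable def gterm {q : ℕ} (a : Fin q → ℕ) (m : ℕ) : ℝ :=
  (Nat.multinomial Finset.univ a : ℝ) ^ m / ((∑ i, a i : ℝ) ^ m * (m)!)

lemma gterm_zero {q : ℕ} (a : Fin q → ℕ) : gterm a 0 = 1 := by
  simp [gterm]

lemma Mcoef_eq_prod {q : ℕ} (n : Fin q → ℕ) (A : (Fin q → ℕ) →₀ ℕ)
    (V : Finset (Fin q → ℕ)) (hV : A.support ⊆ V) :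
    Mcoef n A = (∏ i, ((n i)! : ℝ)) * ∏ a ∈ V, gterm a (A a) := by
  unfold Mcoef
  congr 1
  refine Finset.prod_subset hV ?_
  intro a _ ha
  rw [Finsupp.notMem_support_iff.mp ha]
  exact gterm_zero a

lemma colA_apply_eq_sum {q : ℕ} (A : (Fin q → ℕ) →₀ ℕ) (j : Fin q) :
    colA A j = A.sum (fun a m => m * a j) := rfl

lemma asize_eq_sum {q : ℕ} (A : (Fin q → ℕ) →₀ ℕ) :
    asize A = A.sum (fun _ m => m) := rfl

lemma colA_add {q : ℕ} (A B : (Fin q → ℕ) →₀ ℕ) (j : Fin q) :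
    colA (A + B) j = colA A j + colA B j := by
  simp only [colA_apply_eq_sum]
  exact Finsupp.sum_add_index (by simp) (by intros; rw [add_mul])

lemma colA_single {q : ℕ} (b : Fin q → ℕ) (m : ℕ) (j : Fin q) :
    colA (Finsupp.single b m) j = m * b j := by
  simp only [colA_apply_eq_sum]
  exact Finsupp.sum_single_index (by simp)

lemma asize_add {q : ℕ} (A B : (Fin q → ℕ) →₀ ℕ) :
    asize (A + B) = asize A + asize B := by
  simp only [asize_eq_sum]
  exact Finsupp.sum_add_index (by simp) (by intros; rfl)

lemma asize_single {q : ℕ} (b : Fin q → ℕ) (m : ℕ) :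
    asize (Finsupp.single b m) = m := by
  simp only [asize_eq_sum]
  exact Finsupp.sum_single_index rfl

lemma mem_Iic_of_mem_support {q : ℕ} {n : Fin q → ℕ} {A : (Fin q → ℕ) →₀ ℕ}
    (hA : A ∈ CPartSet n) {a : Fin q → ℕ} (ha : a ∈ A.support) : a ∈ Finset.Iic n := by
  rw [Finset.mem_Iic]
  intro i
  calc a i ≤ A a * a i := Nat.le_mul_of_pos_left _ (Nat.pos_of_ne_zero (Finsupp.mem_support_iff.mp ha))
  _ ≤ ∑ b ∈ A.support, A b * b i :=
      Finset.single_le_sum (f := fun b => A b * b i) (fun _ _ => Nat.zero_le _) ha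
  _ = n i := congrFun hA.2 i

lemma val_le_of_mem {q : ℕ} {n : Fin q → ℕ} {A : (Fin q → ℕ) →₀ ℕ}
    (hA : A ∈ CPartSet n) (a : Fin q → ℕ) : A a ≤ ∑ i, n i := by
  by_cases ha : a ∈ A.support
  · have hane : a ≠ 0 := by
      rintro rfl; exact (Finsupp.mem_support_iff.mp ha) hA.1
    obtain ⟨i, hi⟩ : ∃ i, a i ≠ 0 := by
      by_contra h; push_neg at h; exact hane (funext fun i => h i)
    calc A a ≤ A a * a i := Nat.le_mul_of_pos_right _ (Nat.pos_of_ne_zero hi)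
    _ ≤ ∑ b ∈ A.support, A b * b i :=
        Finset.single_le_sum (f := fun b => A b * b i) (fun _ _ => Nat.zero_le _) ha
    _ = n i := congrFun hA.2 i
    _ ≤ ∑ i, n i := Finset.single_le_sum (fun _ _ => Nat.zero_le _) (Finset.mem_univ i)
  · rw [Finsupp.notMem_support_iff.mp ha]; exact Nat.zero_le _

lemma cpart_finite {q : ℕ} (n : Fin q → ℕ) : (CPartSet n).Finite := by
  have : Finite ↥(CPartSet n) := by
    let N := ∑ i, n i
    refine Finite.of_injective
      (fun A : ↥(CPartSet n) => fun s : ↥(Finset.Iic n) => (⟨A.1 s.1, Nat.lt_succ_of_le (val_le_of_mem A.2 s.1)⟩ : Fin (N+1))) ?_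
    intro A B h
    ext1
    ext a
    by_cases ha : a ∈ Finset.Iic n
    · have := congrFun h ⟨a, ha⟩
      exact congrArg Fin.val this
    · have h1 : A.1 a = 0 := by
        by_contra h1
        exact ha (mem_Iic_of_mem_support A.2 (Finsupp.mem_support_iff.mpr h1))
      have h2 : B.1 a = 0 := by
        by_contra h2
        exact ha (mem_Iic_of_mem_support B.2 (Finsupp.mem_support_iff.mpr h2))
      rw [h1, h2]
  exact (CPartSet n).toFinite

noncomputable def Pfin {q : ℕ} (n : Fin q → ℕ) : Finset ((Fin q → ℕ) →₀ ℕ) :=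
  (cpart_finite n).toFinset

lemma mem_Pfin {q : ℕ} {n : Fin q → ℕ} {A : (Fin q → ℕ) →₀ ℕ} :
    A ∈ Pfin n ↔ A ∈ CPartSet n := Set.Finite.mem_toFinset _

lemma sum_mul_apply {q : ℕ} {n : Fin q → ℕ} {A : (Fin q → ℕ) →₀ ℕ}
    (hA : A ∈ CPartSet n) (j : Fin q) :
    ∑ a ∈ Finset.Iic n, A a * a j = n j := by
  rw [← (Finset.sum_subset (fun a ha => mem_Iic_of_mem_support hA ha)
    (fun a _ ha => by rw [Finsupp.notMem_support_iff.mp ha, zero_mul]))]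
  exact congrFun hA.2 j

lemma sum_mul_size {q : ℕ} {n : Fin q → ℕ} {A : (Fin q → ℕ) →₀ ℕ}
    (hA : A ∈ CPartSet n) :
    ∑ a ∈ Finset.Iic n, A a * (∑ i, a i) = ∑ i, n i := by
  calc ∑ a ∈ Finset.Iic n, A a * (∑ i, a i)
      = ∑ a ∈ Finset.Iic n, ∑ i, A a * a i := by
        refine Finset.sum_congr rfl fun a _ => Finset.mul_sum _ _ _
    _ = ∑ i, ∑ a ∈ Finset.Iic n, A a * a i := Finset.sum_comm
    _ = ∑ i, n i := Finset.sum_congr rfl fun i _ => sum_mul_apply hA i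

lemma prod_fact_succ {q : ℕ} {n n' : Fin q → ℕ} {j : Fin q}
    (h : ∀ i, n i = n' i + (if i = j then 1 else 0)) :
    (∏ i, ((n i)! : ℝ)) = (n j : ℝ) * ∏ i, ((n' i)! : ℝ) := by
  have h1 : ∀ i, ((n i)! : ℝ) = ((n' i)! : ℝ) * (if i = j then (n j : ℝ) else 1) := by
    intro i
    by_cases hij : i = j
    · subst hij
      rw [if_pos rfl, h i, if_pos rfl, Nat.factorial_succ]
      push_cast
      ring
    · rw [if_neg hij, h i, if_neg hij, mul_one, add_zero]
  rw [Finset.prod_congr rfl (fun i _ => h1 i), Finset.prod_mul_distrib,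
    Finset.prod_ite_eq' Finset.univ j (fun _ => (n j : ℝ)), if_pos (Finset.mem_univ j)]
  ring

lemma prod_fact_vec_succ {q : ℕ} {a b : Fin q → ℕ} {j : Fin q}
    (h : ∀ i, a i = b i + (if i = j then 1 else 0)) :
    (∏ i, (a i)!) = a j * ∏ i, (b i)! := by
  have h1 : ∀ i, (a i)! = (b i)! * (if i = j then a j else 1) := by
    intro i
    by_cases hij : i = j
    · subst hij
      rw [if_pos rfl, h i, if_pos rfl, Nat.factorial_succ, mul_comm]
    · rw [if_neg hij, h i, if_neg hij, mul_one, add_zero]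
  rw [Finset.prod_congr rfl (fun i _ => h1 i), Finset.prod_mul_distrib,
    Finset.prod_ite_eq' Finset.univ j (fun _ => a j), if_pos (Finset.mem_univ j)]
  ring

lemma sum_vec_succ {q : ℕ} {a b : Fin q → ℕ} {j : Fin q}
    (h : ∀ i, a i = b i + (if i = j then 1 else 0)) :
    (∑ i, a i) = (∑ i, b i) + 1 := by
  have : (∑ i, a i) = (∑ i, b i) + ∑ i, (if i = j then 1 else 0) := by
    rw [← Finset.sum_add_distrib]
    exact Finset.sum_congr rfl fun i _ => h i
  rw [this, Finset.sum_ite_eq' Finset.univ j (fun _ => 1), if_pos (Finset.mem_univ j)]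

lemma multinomial_succ_key {q : ℕ} {a b : Fin q → ℕ} {j : Fin q}
    (h : ∀ i, a i = b i + (if i = j then 1 else 0)) :
    a j * Nat.multinomial Finset.univ a = (∑ i, a i) * Nat.multinomial Finset.univ b := by
  have hprodpos : 0 < ∏ i, (b i)! := Finset.prod_pos fun i _ => Nat.factorial_pos _
  apply Nat.eq_of_mul_eq_mul_left hprodpos
  calc (∏ i, (b i)!) * (a j * Nat.multinomial Finset.univ a)
      = a j * ((∏ i, (b i)!) * Nat.multinomial Finset.univ a) := by ring
    _ = (∏ i, (a i)!) * Nat.multinomial Finset.univ a := by rw [prod_fact_vec_succ h]; ring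
    _ = (∑ i, a i)! := Nat.multinomial_spec _ _
    _ = (∑ i, a i) * (∑ i, b i)! := by rw [sum_vec_succ h, Nat.factorial_succ]
    _ = (∑ i, a i) * ((∏ i, (b i)!) * Nat.multinomial Finset.univ b) := by
        rw [Nat.multinomial_spec]
    _ = (∏ i, (b i)!) * ((∑ i, a i) * Nat.multinomial Finset.univ b) := by ring

lemma multinomial_unit {q : ℕ} (j : Fin q) :
    Nat.multinomial Finset.univ (fun i => if i = j then 1 else 0) = 1 := by
  have hs : (∑ i, if i = j then 1 else 0) = 1 := by
    rw [Finset.sum_ite_eq' Finset.univ j (fun _ => 1), if_pos (Finset.mem_univ j)]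
  have hp : (∏ i, (if i = j then 1 else 0 : ℕ)!) = 1 := by
    refine Finset.prod_eq_one fun i _ => ?_
    by_cases hij : i = j <;> simp [hij]
  have := Nat.multinomial_spec Finset.univ (fun i => if i = j then 1 else 0)
  rw [hp, hs, one_mul, Nat.factorial_one] at this
  exact this

lemma single_apply_zero {q : ℕ} {u : Fin q → ℕ} (hu : u ≠ 0) (m : ℕ) :
    (Finsupp.single u m) 0 = 0 := by
  rw [Finsupp.single_apply, if_neg hu]

lemma cpart_add_single {q : ℕ} {n' u : Fin q → ℕ} (hu : u ≠ 0)
    {A' : (Fin q → ℕ) →₀ ℕ} (hA' : A' ∈ CPartSet n') {n : Fin q → ℕ}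
    (hbal : ∀ i, n i = n' i + u i) :
    A' + Finsupp.single u 1 ∈ CPartSet n := by
  constructor
  · rw [Finsupp.add_apply, hA'.1, single_apply_zero hu, add_zero]
  · funext i
    rw [colA_add, colA_single, hA'.2, one_mul, ← hbal i]

lemma cpart_sub_single {q : ℕ} {n n' u : Fin q → ℕ} (hu : u ≠ 0)
    {A A' : (Fin q → ℕ) →₀ ℕ} (hA : A ∈ CPartSet n)
    (hE : A' + Finsupp.single u 1 = A) (hbal : ∀ i, n i = n' i + u i) :
    A' ∈ CPartSet n' := by
  constructor
  · have h0 : A' 0 + (Finsupp.single u 1) 0 = A 0 := by rw [← Finsupp.add_apply, hE]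
    rw [single_apply_zero hu, hA.1] at h0
    omega
  · funext i
    have hcol : colA A' i + 1 * u i = colA A i := by rw [← colA_single, ← colA_add, hE]
    rw [hA.2] at hcol
    have := hbal i
    omega

lemma cpart_shift {q : ℕ} {n n' u v : Fin q → ℕ} (hu : u ≠ 0) (hv : v ≠ 0)
    (hbal : ∀ i, n' i + u i = n i + v i) {A A' : (Fin q → ℕ) →₀ ℕ}
    (hE : A' + Finsupp.single u 1 = A + Finsupp.single v 1) (hA : A ∈ CPartSet n) :
    A' ∈ CPartSet n' := by
  constructor
  · have h0 : A' 0 + (Finsupp.single u 1) 0 = A 0 + (Finsupp.single v 1) 0 := by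
      rw [← Finsupp.add_apply, ← Finsupp.add_apply, hE]
    rw [single_apply_zero hu, single_apply_zero hv, hA.1] at h0
    omega
  · funext i
    have hcol : colA A' i + 1 * u i = colA A i + 1 * v i := by
      rw [← colA_single u 1 i, ← colA_single v 1 i, ← colA_add, ← colA_add, hE]
    rw [hA.2] at hcol
    have := hbal i
    omega

lemma asize_shift {q : ℕ} {u v : Fin q → ℕ} {A A' : (Fin q → ℕ) →₀ ℕ}
    (hE : A' + Finsupp.single u 1 = A + Finsupp.single v 1) :
    asize A' = asize A := by
  have h1 := congrArg asize hE
  rw [asize_add, asize_add, asize_single, asize_single] at h1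
  omega

lemma asize_pred {q : ℕ} {u : Fin q → ℕ} {A A' : (Fin q → ℕ) →₀ ℕ}
    (hE : A' + Finsupp.single u 1 = A) :
    asize A' + 1 = asize A := by
  have h1 := congrArg asize hE
  rw [asize_add, asize_single] at h1
  exact h1

lemma gterm_unit {q : ℕ} (j : Fin q) (m : ℕ) :
    gterm (fun i => if i = j then 1 else 0) m = 1 / (m)! := by
  have hs : (∑ i, (if i = j then (1:ℕ) else 0)) = 1 := by
    rw [Finset.sum_ite_eq' Finset.univ j (fun _ => 1), if_pos (Finset.mem_univ j)]
  unfold gterm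
  rw [multinomial_unit, ← Nat.cast_sum, hs]
  norm_num

lemma gterm_unit_step {q : ℕ} (j : Fin q) (c : ℕ) :
    ((c + 1 : ℕ) : ℝ) * gterm (fun i => if i = j then 1 else 0) (c + 1)
      = gterm (fun i => if i = j then 1 else 0) c := by
  rw [gterm_unit, gterm_unit, Nat.factorial_succ]
  have hc : ((c)! : ℝ) ≠ 0 := Nat.cast_ne_zero.mpr (Nat.factorial_ne_zero c)
  have hc1 : ((c : ℝ) + 1) ≠ 0 := by positivity
  push_cast
  field_simp

lemma gterm_step {q : ℕ} {a b : Fin q → ℕ} {j : Fin q}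
    (h : ∀ i, a i = b i + (if i = j then 1 else 0)) (hb : b ≠ 0) (c d : ℕ) :
    ((c + 1 : ℕ) : ℝ) * (a j) * gterm a (c + 1) * gterm b d
      = (((d + 1 : ℕ) : ℝ) * (∑ i, (b i : ℝ))) * gterm a c * gterm b (d + 1) := by
  have hsa : (∑ i, (a i : ℝ)) ≠ 0 := by
    rw [← Nat.cast_sum]
    exact Nat.cast_ne_zero.mpr (by rw [sum_vec_succ h]; omega)
  have hsb : (∑ i, (b i : ℝ)) ≠ 0 := by
    rw [← Nat.cast_sum]
    refine Nat.cast_ne_zero.mpr fun hz => hb ?_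
    funext i
    exact (Finset.sum_eq_zero_iff.mp hz) i (Finset.mem_univ i)
  have hkey : (a j : ℝ) * (Nat.multinomial Finset.univ a : ℝ)
      = (∑ i, (a i : ℝ)) * (Nat.multinomial Finset.univ b : ℝ) := by
    have := multinomial_succ_key h
    rw [← Nat.cast_sum]
    exact_mod_cast congrArg (Nat.cast : ℕ → ℝ) this
  unfold gterm
  set Ma := (Nat.multinomial Finset.univ a : ℝ)
  set Mb := (Nat.multinomial Finset.univ b : ℝ)
  set sa := (∑ i, (a i : ℝ))
  set sb := (∑ i, (b i : ℝ))
  rw [pow_succ, pow_succ, pow_succ, pow_succ, Nat.factorial_succ, Nat.factorial_succ]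
  have hc : ((c)! : ℝ) ≠ 0 := Nat.cast_ne_zero.mpr (Nat.factorial_ne_zero c)
  have hd : ((d)! : ℝ) ≠ 0 := Nat.cast_ne_zero.mpr (Nat.factorial_ne_zero d)
  have hc1 : ((c:ℝ)+1) ≠ 0 := by positivity
  have hd1 : ((d:ℝ)+1) ≠ 0 := by positivity
  push_cast
  field_simp
  linear_combination Ma^c * Mb^d * hkey

lemma supp_subset_Iic {q : ℕ} {n : Fin q → ℕ} {A : (Fin q → ℕ) →₀ ℕ}
    (hA : A ∈ CPartSet n) : A.support ⊆ Finset.Iic n :=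
  fun _ hx => mem_Iic_of_mem_support hA hx

lemma unit_step_sum {q : ℕ} {n n' : Fin q → ℕ} {j : Fin q}
    (hn' : ∀ i, n i = n' i + (if i = j then 1 else 0)) (θ : ℝ) :
    ∑ A ∈ Pfin n, ((A (fun i => if i = j then 1 else 0) : ℕ) : ℝ) * (θ ^ asize A * Mcoef n A)
      = (n j : ℝ) * θ * ∑ A' ∈ Pfin n', θ ^ asize A' * Mcoef n' A' := by
  classical
  set ej : Fin q → ℕ := fun i => if i = j then 1 else 0 with hej
  have hbal : ∀ i, n i = n' i + ej i := hn'
  have hejne : ej ≠ 0 := by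
    intro h
    have := congrFun h j
    simp [hej] at this
  have hej_le : ej ∈ Finset.Iic n := by
    rw [Finset.mem_Iic]
    intro i
    have h1 := hn' i
    simp only [hej]
    by_cases hij : i = j
    · rw [if_pos hij] at h1 ⊢
      omega
    · rw [if_neg hij] at h1 ⊢
      omega
  have hn'_le : Finset.Iic n' ⊆ Finset.Iic n :=
    Finset.Iic_subset_Iic.mpr fun i =>
      le_of_le_of_eq (Nat.le_add_right (n' i) (ej i)) (hbal i).symm
  rw [Finset.mul_sum, ← Finset.sum_filter_of_ne
    (p := fun A => A ej ≠ 0) (fun A _ hne hz => hne (by rw [hz]; simp))]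
  refine Finset.sum_bij' (fun A _ => A - Finsupp.single ej 1)
    (fun A' _ => A' + Finsupp.single ej 1) ?_ ?_ ?_ ?_ ?_
  · -- forward membership
    intro A hA
    rw [Finset.mem_filter] at hA
    obtain ⟨hA, hA0⟩ := hA
    rw [mem_Pfin] at hA ⊢
    have hle : Finsupp.single ej 1 ≤ A := Finsupp.single_le_iff.mpr (by omega)
    exact cpart_sub_single hejne hA (tsub_add_cancel_of_le hle) hbal
  · -- backward membership
    intro A' hA'
    rw [mem_Pfin] at hA'
    rw [Finset.mem_filter, mem_Pfin]
    refine ⟨cpart_add_single hejne hA' hbal, ?_⟩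
    rw [Finsupp.add_apply, Finsupp.single_apply, if_pos rfl]
    omega
  · -- left inverse
    intro A hA
    rw [Finset.mem_filter] at hA
    have hle : Finsupp.single ej 1 ≤ A := Finsupp.single_le_iff.mpr (by omega)
    exact tsub_add_cancel_of_le hle
  · -- right inverse
    intro A' _
    exact add_tsub_cancel_right _ _
  · -- terms agree
    intro A hA
    rw [Finset.mem_filter] at hA
    obtain ⟨hA, hA0⟩ := hA
    rw [mem_Pfin] at hA
    have hle : Finsupp.single ej 1 ≤ A := Finsupp.single_le_iff.mpr (by omega)
    set A' := A - Finsupp.single ej 1 with hA'def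
    have hE : A' + Finsupp.single ej 1 = A := tsub_add_cancel_of_le hle
    have hA' : A' ∈ CPartSet n' := cpart_sub_single hejne hA hE hbal
    have hsize : asize A' + 1 = asize A := asize_pred hE
    -- values
    have hvej : A ej = A' ej + 1 := by
      rw [← hE, Finsupp.add_apply, Finsupp.single_apply, if_pos rfl]
    have hvx : ∀ x, x ≠ ej → A x = A' x := by
      intro x hx
      rw [← hE, Finsupp.add_apply, Finsupp.single_apply, if_neg (fun h => hx h.symm), add_zero]
    -- expand Mcoef over Iic n
    rw [Mcoef_eq_prod n A _ (supp_subset_Iic hA),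
      Mcoef_eq_prod n' A' _ ((supp_subset_Iic hA').trans hn'_le)]
    rw [← Finset.mul_prod_erase _ _ hej_le,
      ← Finset.mul_prod_erase _ (fun x => gterm x (A' x)) hej_le]
    have hrest : ∏ x ∈ (Finset.Iic n).erase ej, gterm x (A x)
        = ∏ x ∈ (Finset.Iic n).erase ej, gterm x (A' x) :=
      Finset.prod_congr rfl fun x hx => by rw [hvx x (Finset.ne_of_mem_erase hx)]
    beta_reduce
    rw [hrest, prod_fact_succ hn', hvej, ← hsize, pow_succ]
    have hstep := gterm_unit_step j (A' ej)
    rw [← hej] at hstep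
    push_cast at hstep ⊢
    linear_combination (θ ^ asize A' * θ * (n j : ℝ) * (∏ i, ((n' i)! : ℝ)) *
      (∏ x ∈ (Finset.Iic n).erase ej, gterm x (A' x))) * hstep

lemma shift_step_sum {q : ℕ} {n n' a b : Fin q → ℕ} {j : Fin q}
    (hn' : ∀ i, n i = n' i + (if i = j then 1 else 0))
    (hab : ∀ i, a i = b i + (if i = j then 1 else 0))
    (hb0 : b ≠ 0) (hbn' : ∀ i, b i ≤ n' i) (θ : ℝ) :
    ∑ A ∈ Pfin n, ((A a * a j : ℕ) : ℝ) * (θ ^ asize A * Mcoef n A)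
      = (n j : ℝ) * ∑ A' ∈ Pfin n', ((A' b * ∑ i, b i : ℕ) : ℝ) * (θ ^ asize A' * Mcoef n' A') := by
  classical
  have haj : a j = b j + 1 := by have := hab j; rwa [if_pos rfl] at this
  have ha0 : a ≠ 0 := fun h => by
    have h2 := congrFun h j
    simp only [Pi.zero_apply] at h2
    omega
  have hane : a ≠ b := fun h => by have := congrFun h j; omega
  have hbal : ∀ i, n' i + a i = n i + b i := by
    intro i
    have h1 := hn' i
    have h2 := hab i
    by_cases hij : i = j
    · subst hij; rw [if_pos rfl] at h1 h2; omega
    · rw [if_neg hij] at h1 h2; omega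
  have hbal' : ∀ i, n i + b i = n' i + a i := fun i => (hbal i).symm
  have ha_le : a ∈ Finset.Iic n := by
    rw [Finset.mem_Iic]
    intro i
    show a i ≤ n i
    have h1 := hn' i
    have h2 := hab i
    have h3 := hbn' i
    by_cases hij : i = j
    · subst hij; rw [if_pos rfl] at h1 h2; omega
    · rw [if_neg hij] at h1 h2; omega
  have hb_le_n : b ∈ Finset.Iic n := by
    rw [Finset.mem_Iic]
    intro i
    show b i ≤ n i
    have h1 := hn' i
    have h3 := hbn' i
    by_cases hij : i = j
    · subst hij; rw [if_pos rfl] at h1; omega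
    · rw [if_neg hij] at h1; omega
  have hb_mem_erase : b ∈ (Finset.Iic n).erase a :=
    Finset.mem_erase.mpr ⟨fun h => hane h.symm, hb_le_n⟩
  have hn'_le : Finset.Iic n' ⊆ Finset.Iic n := by
    refine Finset.Iic_subset_Iic.mpr fun i => ?_
    show n' i ≤ n i
    have h1 := hn' i
    by_cases hij : i = j
    · subst hij; rw [if_pos rfl] at h1; omega
    · rw [if_neg hij] at h1; omega
  have hsingle_ab : (Finsupp.single a 1) b = 0 := by
    rw [Finsupp.single_apply, if_neg hane]
  have hsingle_ba : (Finsupp.single b 1) a = 0 := by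
    rw [Finsupp.single_apply, if_neg (fun h => hane h.symm)]
  rw [Finset.mul_sum,
    ← Finset.sum_filter_of_ne (s := Pfin n) (p := fun A => A a ≠ 0)
      (fun A _ hne hz => hne (by rw [hz]; simp)),
    ← Finset.sum_filter_of_ne (s := Pfin n') (p := fun A' => A' b ≠ 0)
      (fun A' _ hne hz => hne (by rw [hz]; simp))]
  refine Finset.sum_bij' (fun A _ => A - Finsupp.single a 1 + Finsupp.single b 1)
    (fun A' _ => A' - Finsupp.single b 1 + Finsupp.single a 1) ?_ ?_ ?_ ?_ ?_
  · -- forward membership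
    intro A hA
    rw [Finset.mem_filter] at hA
    obtain ⟨hA, hA0⟩ := hA
    rw [mem_Pfin] at hA
    rw [Finset.mem_filter, mem_Pfin]
    have hle : Finsupp.single a 1 ≤ A := Finsupp.single_le_iff.mpr (by omega)
    have hE : (A - Finsupp.single a 1 + Finsupp.single b 1) + Finsupp.single a 1
        = A + Finsupp.single b 1 := by
      rw [add_right_comm, tsub_add_cancel_of_le hle]
    refine ⟨cpart_shift ha0 hb0 hbal hE hA, ?_⟩
    rw [Finsupp.add_apply, Finsupp.tsub_apply, hsingle_ab,
      Finsupp.single_apply, if_pos rfl]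
    omega
  · -- backward membership
    intro A' hA'
    rw [Finset.mem_filter] at hA'
    obtain ⟨hA', hA'0⟩ := hA'
    rw [mem_Pfin] at hA'
    rw [Finset.mem_filter, mem_Pfin]
    have hle : Finsupp.single b 1 ≤ A' := Finsupp.single_le_iff.mpr (by omega)
    have hE : (A' - Finsupp.single b 1 + Finsupp.single a 1) + Finsupp.single b 1
        = A' + Finsupp.single a 1 := by
      rw [add_right_comm, tsub_add_cancel_of_le hle]
    refine ⟨cpart_shift hb0 ha0 hbal' hE hA', ?_⟩
    rw [Finsupp.add_apply, Finsupp.tsub_apply, hsingle_ba,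
      Finsupp.single_apply, if_pos rfl]
    omega
  · -- left inverse
    intro A hA
    rw [Finset.mem_filter] at hA
    have hle : Finsupp.single a 1 ≤ A := Finsupp.single_le_iff.mpr (by omega)
    beta_reduce
    rw [add_tsub_cancel_right, tsub_add_cancel_of_le hle]
  · -- right inverse
    intro A' hA'
    rw [Finset.mem_filter] at hA'
    have hle : Finsupp.single b 1 ≤ A' := Finsupp.single_le_iff.mpr (by omega)
    beta_reduce
    rw [add_tsub_cancel_right, tsub_add_cancel_of_le hle]
  · -- terms agree
    intro A hA
    rw [Finset.mem_filter] at hA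
    obtain ⟨hA, hA0⟩ := hA
    rw [mem_Pfin] at hA
    have hle : Finsupp.single a 1 ≤ A := Finsupp.single_le_iff.mpr (by omega)
    obtain ⟨c, hc⟩ : ∃ c, A a = c + 1 := ⟨A a - 1, by omega⟩
    beta_reduce
    set A' := A - Finsupp.single a 1 + Finsupp.single b 1 with hA'def
    have hE : A' + Finsupp.single a 1 = A + Finsupp.single b 1 := by
      rw [hA'def, add_right_comm, tsub_add_cancel_of_le hle]
    have hA'mem : A' ∈ CPartSet n' := cpart_shift ha0 hb0 hbal hE hA
    have hsize : asize A' = asize A := asize_shift hE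
    have hva' : A' a = c := by
      rw [hA'def, Finsupp.add_apply, Finsupp.tsub_apply, hsingle_ba,
        Finsupp.single_apply, if_pos rfl, hc]
      omega
    have hvb' : A' b = A b + 1 := by
      rw [hA'def, Finsupp.add_apply, Finsupp.tsub_apply, hsingle_ab,
        Finsupp.single_apply, if_pos rfl]
      omega
    have hvx : ∀ x, x ≠ a → x ≠ b → A' x = A x := by
      intro x hxa hxb
      rw [hA'def, Finsupp.add_apply, Finsupp.tsub_apply,
        Finsupp.single_apply, if_neg (fun h => hxa h.symm),
        Finsupp.single_apply, if_neg (fun h => hxb h.symm)]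
      omega
    rw [Mcoef_eq_prod n A _ (supp_subset_Iic hA),
      Mcoef_eq_prod n' A' _ ((supp_subset_Iic hA'mem).trans hn'_le),
      ← Finset.mul_prod_erase _ (fun x => gterm x (A x)) ha_le,
      ← Finset.mul_prod_erase _ (fun x => gterm x (A' x)) ha_le,
      ← Finset.mul_prod_erase _ (fun x => gterm x (A x)) hb_mem_erase,
      ← Finset.mul_prod_erase _ (fun x => gterm x (A' x)) hb_mem_erase]
    have hrest : ∏ x ∈ ((Finset.Iic n).erase a).erase b, gterm x (A x)
        = ∏ x ∈ ((Finset.Iic n).erase a).erase b, gterm x (A' x) := by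
      refine Finset.prod_congr rfl fun x hx => ?_
      rw [hvx x (Finset.ne_of_mem_erase (Finset.mem_of_mem_erase hx))
        (Finset.ne_of_mem_erase hx)]
    have hstep := gterm_step hab hb0 c (A b)
    rw [hrest, prod_fact_succ hn', hsize, hva', hvb', hc]
    push_cast at hstep ⊢
    linear_combination ((n j : ℝ) * θ ^ asize A * (∏ i, ((n' i)! : ℝ)) *
      (∏ x ∈ ((Finset.Iic n).erase a).erase b, gterm x (A' x))) * hstep

theorem main_aux (N : ℕ) : ∀ {q : ℕ} (n : Fin q → ℕ), (∑ i, n i) = N → ∀ θ : ℝ,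
    (∑ A ∈ Pfin n, θ ^ asize A * Mcoef n A) = (ascPochhammer ℝ N).eval θ := by
  induction N with
  | zero =>
    intro q n hsum θ
    have hn0 : n = 0 := funext fun i =>
      Finset.sum_eq_zero_iff.mp hsum i (Finset.mem_univ i)
    subst hn0
    have hset : Pfin (0 : Fin q → ℕ) = {0} := by
      ext A
      rw [mem_Pfin, Finset.mem_singleton]
      constructor
      · rintro ⟨h0, hcol⟩
        ext a
        show A a = 0
        by_contra hne
        have hmem : a ∈ A.support := Finsupp.mem_support_iff.mpr hne
        have ha0 : a ≠ 0 := fun h => hne (h ▸ h0)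
        obtain ⟨i, hi⟩ : ∃ i, a i ≠ 0 := by
          by_contra h; push_neg at h; exact ha0 (funext h)
        have hle : A a * a i ≤ colA A i :=
          Finset.single_le_sum (f := fun b => A b * b i) (fun _ _ => Nat.zero_le _) hmem
        rw [hcol] at hle
        simp only [Pi.zero_apply, Nat.le_zero, Nat.mul_eq_zero] at hle
        tauto
      · rintro rfl
        refine ⟨rfl, funext fun i => ?_⟩
        show colA 0 i = 0
        simp [colA]
    rw [hset, Finset.sum_singleton, ascPochhammer_zero]
    have h1 : asize (0 : (Fin q → ℕ) →₀ ℕ) = 0 := by simp [asize]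
    have h2 : Mcoef (0 : Fin q → ℕ) 0 = 1 := by
      unfold Mcoef
      simp
    rw [h1, h2]
    simp
  | succ N ih =>
    intro q n hsum θ
    obtain ⟨j, hj⟩ : ∃ j, n j ≠ 0 := by
      by_contra h
      push_neg at h
      rw [Finset.sum_eq_zero (fun i _ => h i)] at hsum
      omega
    have hn' : ∀ i, n i = (fun i => n i - (if i = j then 1 else 0)) i + (if i = j then 1 else 0) := by
      intro i
      show n i = (n i - if i = j then 1 else 0) + (if i = j then 1 else 0)
      by_cases hij : i = j
      · subst hij; rw [if_pos rfl]; omega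
      · rw [if_neg hij]; omega
    set n' : Fin q → ℕ := fun i => n i - (if i = j then 1 else 0) with hn'def
    have hsum' : ∑ i, n' i = N := by
      have := sum_vec_succ hn'
      omega
    have hF' := ih n' hsum' θ
    have hnj : ((n j : ℕ) : ℝ) ≠ 0 := Nat.cast_ne_zero.mpr hj
    refine mul_left_cancel₀ hnj ?_
    rw [ascPochhammer_succ_right, Polynomial.eval_mul, Polynomial.eval_add,
      Polynomial.eval_X, Polynomial.eval_natCast]
    set ej : Fin q → ℕ := fun i => if i = j then 1 else 0 with hejdef
    set G : (Fin q → ℕ) → ℝ :=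
      fun x => ∑ A ∈ Pfin n, ((A x * x j : ℕ) : ℝ) * (θ ^ asize A * Mcoef n A) with hGdef
    set S : Finset (Fin q → ℕ) := (Finset.Iic n).filter (fun x => x j ≠ 0) with hSdef
    have hej_mem : ej ∈ S := by
      rw [hSdef, Finset.mem_filter]
      constructor
      · rw [Finset.mem_Iic]
        intro i
        show ej i ≤ n i
        have h1 := hn' i
        simp only [hejdef]
        by_cases hij : i = j
        · subst hij; rw [if_pos rfl] at h1 ⊢; omega
        · rw [if_neg hij] at h1 ⊢; omega
      · simp [hejdef]
    have step1 : (n j : ℝ) * ∑ A ∈ Pfin n, θ ^ asize A * Mcoef n A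
        = ∑ x ∈ Finset.Iic n, G x := by
      rw [Finset.mul_sum]
      rw [hGdef]
      rw [Finset.sum_comm]
      refine Finset.sum_congr rfl fun A hA => ?_
      have hc : ∑ x ∈ Finset.Iic n, ((A x * x j : ℕ) : ℝ) = (n j : ℝ) := by
        rw [← Nat.cast_sum, sum_mul_apply (mem_Pfin.mp hA) j]
      rw [← Finset.sum_mul, hc]
    have step2 : ∑ x ∈ Finset.Iic n, G x = ∑ x ∈ S, G x := by
      symm
      refine Finset.sum_filter_of_ne fun x hx hGx => ?_
      intro hxj0
      refine hGx (Finset.sum_eq_zero fun A _ => ?_)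
      rw [hxj0, Nat.mul_zero, Nat.cast_zero, zero_mul]
    have step3 : ∑ x ∈ S, G x = G ej + ∑ x ∈ S.erase ej, G x :=
      (Finset.add_sum_erase S G hej_mem).symm
    have step4 : G ej = (n j : ℝ) * θ * ∑ A' ∈ Pfin n', θ ^ asize A' * Mcoef n' A' := by
      have hejj : ej j = 1 := by simp [hejdef]
      have hLHS : ∀ A : (Fin q → ℕ) →₀ ℕ, (A ej * ej j : ℕ) = A ej := by
        intro A
        rw [hejj, Nat.mul_one]
      show (∑ A ∈ Pfin n, ((A ej * ej j : ℕ) : ℝ) * (θ ^ asize A * Mcoef n A)) = _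
      calc (∑ A ∈ Pfin n, ((A ej * ej j : ℕ) : ℝ) * (θ ^ asize A * Mcoef n A))
          = ∑ A ∈ Pfin n, ((A ej : ℕ) : ℝ) * (θ ^ asize A * Mcoef n A) :=
            Finset.sum_congr rfl fun A _ => by rw [hLHS A]
        _ = _ := unit_step_sum hn' θ
    have step5 : ∑ x ∈ S.erase ej, G x
        = ∑ b ∈ (Finset.Iic n').erase 0, G (fun i => b i + if i = j then 1 else 0) := by
      refine Finset.sum_nbij' (fun x => fun i => x i - if i = j then 1 else 0)
        (fun b => fun i => b i + if i = j then 1 else 0) ?_ ?_ ?_ ?_ ?_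
      · intro x hx
        rw [Finset.mem_erase] at hx
        obtain ⟨hxne, hxS⟩ := hx
        rw [hSdef, Finset.mem_filter, Finset.mem_Iic] at hxS
        obtain ⟨hxle, hxj⟩ := hxS
        rw [Finset.mem_erase]
        constructor
        · intro h
          refine hxne (funext fun i => ?_)
          have hzi := congrFun h i
          simp only [Pi.zero_apply] at hzi
          have hxi := hxle i
          simp only [hejdef]
          by_cases hij : i = j
          · subst hij
            rw [if_pos rfl] at hzi ⊢
            omega
          · rw [if_neg hij] at hzi ⊢
            omega
        · rw [Finset.mem_Iic]
          intro i
          show x i - (if i = j then 1 else 0) ≤ n' i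
          have h1 := hn' i
          have hxi : x i ≤ n i := hxle i
          by_cases hij : i = j
          · subst hij
            rw [if_pos rfl] at h1 ⊢
            omega
          · rw [if_neg hij] at h1 ⊢
            omega
      · intro b hb
        rw [Finset.mem_erase] at hb
        obtain ⟨hbne, hble⟩ := hb
        rw [Finset.mem_Iic] at hble
        rw [Finset.mem_erase]
        refine ⟨?_, ?_⟩
        · intro h
          refine hbne (funext fun i => ?_)
          have hbi := congrFun h i
          simp only [Pi.zero_apply]
          simp only [hejdef] at hbi
          by_cases hij : i = j
          · subst hij
            rw [if_pos rfl] at hbi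
            omega
          · rw [if_neg hij] at hbi
            omega
        · rw [hSdef, Finset.mem_filter, Finset.mem_Iic]
          constructor
          · intro i
            show b i + (if i = j then 1 else 0) ≤ n i
            have h1 := hn' i
            have hbi : b i ≤ n' i := hble i
            by_cases hij : i = j
            · subst hij; rw [if_pos rfl] at h1 ⊢; omega
            · rw [if_neg hij] at h1 ⊢; omega
          · show b j + (if j = j then 1 else 0) ≠ 0
            rw [if_pos rfl]
            omega
      · intro x hx
        rw [Finset.mem_erase, hSdef, Finset.mem_filter] at hx
        funext i
        show (x i - if i = j then 1 else 0) + (if i = j then 1 else 0) = x i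
        by_cases hij : i = j
        · subst hij
          rw [if_pos rfl]
          have := hx.2.2
          omega
        · rw [if_neg hij]
          omega
      · intro b _
        funext i
        show (b i + if i = j then 1 else 0) - (if i = j then 1 else 0) = b i
        by_cases hij : i = j
        · subst hij; rw [if_pos rfl]; omega
        · rw [if_neg hij]
          omega
      · intro x hx
        rw [Finset.mem_erase, hSdef, Finset.mem_filter] at hx
        have hfix : (fun i => (x i - if i = j then 1 else 0) + if i = j then 1 else 0) = x := by
          funext i
          by_cases hij : i = j
          · subst hij
            rw [if_pos rfl]
            have := hx.2.2
            omega
          · rw [if_neg hij]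
            omega
        exact (congrArg G hfix).symm
    have step6 : ∀ b ∈ (Finset.Iic n').erase 0,
        G (fun i => b i + if i = j then 1 else 0)
          = (n j : ℝ) * ∑ A' ∈ Pfin n', ((A' b * ∑ i, b i : ℕ) : ℝ) * (θ ^ asize A' * Mcoef n' A') := by
      intro b hb
      rw [Finset.mem_erase, Finset.mem_Iic] at hb
      rw [hGdef]
      exact shift_step_sum hn' (fun i => rfl) hb.1 (fun i => hb.2 i) θ
    have step7 : ∑ b ∈ (Finset.Iic n').erase 0,
        G (fun i => b i + if i = j then 1 else 0)
          = (n j : ℝ) * ((N : ℝ) * ∑ A' ∈ Pfin n', θ ^ asize A' * Mcoef n' A') := by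
      rw [Finset.sum_congr rfl step6, ← Finset.mul_sum]
      congr 1
      rw [Finset.sum_comm, Finset.mul_sum]
      refine Finset.sum_congr rfl fun A' hA' => ?_
      have hsz : ∑ b ∈ (Finset.Iic n').erase 0, (A' b * ∑ i, b i) = N := by
        rw [Finset.sum_erase _ (by simp), sum_mul_size (mem_Pfin.mp hA'), hsum']
      rw [← Finset.sum_mul, ← Nat.cast_sum, hsz]
    rw [step1, step2, step3, step4, step5, step7, hF']
    ring

theorem sum_theta_Mcoef_eq_pochhammer (q : ℕ) (hq : 1 ≤ q) (n : Fin q → ℕ) (hn : n ≠ 0)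
    (θ : ℝ) :
    ∑ᶠ A ∈ CPartSet n, θ ^ asize A * Mcoef n A =
      (ascPochhammer ℝ (∑ j, n j)).eval θ := by
  rw [← Set.Finite.coe_toFinset (cpart_finite n), finsum_mem_coe_finset]
  exact main_aux (∑ j, n j) n rfl θ
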